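/- arXiv:math/0409220 — 2 statements merged into one kernel-verified Lean document; each statement's English description precedes it below -/
import Mathlib

section
/- For every radius r > 0 and every complex number w, the Carathéodory norm of w at the origin of the disk Δ_r equals (2/r)|w|; that is, the supremum, over all holomorphic maps f : Δ_r → Δ, of 2|f'(0)·w|/(1 − |f(0)|²) is exactly (2/r)|w|. -/
open Metric Set

lemma mobius_normSq (a z : ℂ) : Complex.normSq (1 - (starRingEnd ℂ) a * z) - Complex.normSq (z - a)
    = (1 - Complex.normSq a) * (1 - Complex.normSq z) := by
  simp [Complex.normSq_apply, Complex.mul_re, Complex.mul_im]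
  ring

lemma mobius_denom_ne {a z : ℂ} (ha : ‖a‖ < 1) (hz : ‖z‖ < 1) :
    1 - (starRingEnd ℂ) a * z ≠ 0 := by
  intro h
  have : ‖(starRingEnd ℂ) a * z‖ < 1 := by
    rw [norm_mul, RCLike.norm_conj]
    nlinarith [norm_nonneg a, norm_nonneg z]
  rw [sub_eq_zero] at h
  rw [← h] at this
  simp at this

lemma mobius_mapsTo {a z : ℂ} (ha : ‖a‖ < 1) (hz : ‖z‖ < 1) :
    ‖(z - a) / (1 - (starRingEnd ℂ) a * z)‖ < 1 := by
  rw [norm_div, div_lt_one (norm_pos_iff.2 (mobius_denom_ne ha hz))]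
  have := mobius_normSq a z
  rw [Complex.normSq_eq_norm_sq, Complex.normSq_eq_norm_sq, Complex.normSq_eq_norm_sq,
    Complex.normSq_eq_norm_sq] at this
  have h1 : (0:ℝ) < 1 - ‖a‖ ^ 2 := by nlinarith [norm_nonneg a]
  have h2 : (0:ℝ) < 1 - ‖z‖ ^ 2 := by nlinarith [norm_nonneg z]
  have hlt : ‖z - a‖ ^ 2 < ‖1 - (starRingEnd ℂ) a * z‖ ^ 2 := by nlinarith [mul_pos h1 h2]
  exact lt_of_pow_lt_pow_left₀ 2 (norm_nonneg _) hlt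

/-- The Schwarz–Pick inequality at the center of a disk of radius `r`. -/
lemma schwarz_pick_zero {r : ℝ} (hr : 0 < r) {f : ℂ → ℂ}
    (hd : DifferentiableOn ℂ f (ball 0 r)) (hm : MapsTo f (ball 0 r) (ball 0 1)) :
    ‖deriv f 0‖ ≤ (1 - ‖f 0‖ ^ 2) / r := by
  set a := f 0 with ha_def
  have ha : ‖a‖ < 1 := by simpa using hm (mem_ball_self hr)
  set φ : ℂ → ℂ := fun z => (z - a) / (1 - (starRingEnd ℂ) a * z) with hφ
  have hφd : DifferentiableOn ℂ φ (ball 0 1) := by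
    intro z hz
    apply DifferentiableAt.differentiableWithinAt
    apply DifferentiableAt.div
    · exact (differentiable_id.sub_const a).differentiableAt
    · exact ((differentiable_const _).sub ((differentiable_const _).mul differentiable_id)).differentiableAt
    · exact mobius_denom_ne ha (by simpa using hz)
  have hφm : MapsTo φ (ball 0 1) (ball 0 1) := fun z hz => by
    rw [mem_ball, dist_zero_right]
    exact mobius_mapsTo ha (by simpa using hz)
  have hne : 1 - (starRingEnd ℂ) a * a ≠ 0 := mobius_denom_ne ha ha
  have hφa : HasDerivAt φ (1 / (1 - (starRingEnd ℂ) a * a)) a := by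
    have h1 : HasDerivAt (fun z : ℂ => z - a) 1 a := (hasDerivAt_id a).sub_const a
    have h2 : HasDerivAt (fun z : ℂ => 1 - (starRingEnd ℂ) a * z) (-(starRingEnd ℂ) a) a := by
      simpa using ((hasDerivAt_id a).const_mul ((starRingEnd ℂ) a)).const_sub 1
    have := h1.div h2 hne
    refine this.congr_deriv ?_
    rw [sub_self, zero_mul, sub_zero, one_mul, sq, ← div_div, div_self hne]
  have hf0 : DifferentiableAt ℂ f 0 := hd.differentiableAt (ball_mem_nhds _ hr)
  have hfd : HasDerivAt f (deriv f 0) 0 := hf0.hasDerivAt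
  have hg : HasDerivAt (φ ∘ f) (1 / (1 - (starRingEnd ℂ) a * a) * deriv f 0) 0 :=
    hφa.comp 0 hfd
  have hg0 : (φ ∘ f) 0 = 0 := by simp [φ, ha_def]
  have hgd : DifferentiableOn ℂ (φ ∘ f) (ball 0 r) := hφd.comp hd hm
  have hgm : MapsTo (φ ∘ f) (ball 0 r) (ball ((φ ∘ f) 0) 1) := by
    rw [hg0]; exact hφm.comp hm
  have key := Complex.norm_deriv_le_div_of_mapsTo_ball hgd (hgm.mono_right ball_subset_closedBall) hr
  rw [hg.deriv, norm_mul, norm_div, norm_one] at key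
  have hden : ‖1 - (starRingEnd ℂ) a * a‖ = 1 - ‖a‖ ^ 2 := by
    have h : (starRingEnd ℂ) a * a = (Complex.normSq a : ℂ) := by
      rw [Complex.normSq_eq_conj_mul_self]
    rw [h, Complex.normSq_eq_norm_sq, ← Complex.ofReal_one, ← Complex.ofReal_sub,
      Complex.norm_real, Real.norm_of_nonneg (by nlinarith [norm_nonneg a])]
  rw [hden] at key
  have hpos : 0 < 1 - ‖a‖ ^ 2 := by nlinarith [norm_nonneg a]
  rw [div_mul_eq_mul_div, div_le_div_iff₀ hpos hr] at key
  rw [le_div_iff₀ hr]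
  nlinarith

/-- The Carathéodory norm of a tangent vector `w` at a point `p` of an open set
`X ⊆ ℂ`: the supremum over holomorphic maps `f : X → Δ` (the unit disk) of
`2‖f'(p)·w‖ / (1 - ‖f p‖²)`. -/
noncomputable def caraNormDisk (X : Set ℂ) (p w : ℂ) : ℝ :=
  sSup {y : ℝ | ∃ f : ℂ → ℂ, DifferentiableOn ℂ f X ∧
    Set.MapsTo f X (Metric.ball (0 : ℂ) 1) ∧
    y = 2 * ‖deriv f p * w‖ / (1 - ‖f p‖ ^ 2)}

/-- For every `r > 0` and every `w : ℂ`, the Carathéodory norm of `w` at the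
origin of the disk `Δ_r` equals `(2/r)‖w‖`. -/
theorem caraNorm_ball_complex (r : ℝ) (hr : 0 < r) (w : ℂ) :
    caraNormDisk (Metric.ball (0 : ℂ) r) 0 w = (2 / r) * ‖w‖ := by
  set S := {y : ℝ | ∃ f : ℂ → ℂ, DifferentiableOn ℂ f (Metric.ball (0:ℂ) r) ∧
    Set.MapsTo f (Metric.ball (0:ℂ) r) (Metric.ball (0 : ℂ) 1) ∧
    y = 2 * ‖deriv f 0 * w‖ / (1 - ‖f 0‖ ^ 2)} with hS
  have hub : ∀ y ∈ S, y ≤ (2 / r) * ‖w‖ := by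
    rintro y ⟨f, hd, hm, rfl⟩
    have hs : ‖f 0‖ < 1 := by simpa using hm (mem_ball_self hr)
    have hpos : (0:ℝ) < 1 - ‖f 0‖ ^ 2 := by nlinarith [norm_nonneg (f 0)]
    have hsp := schwarz_pick_zero hr hd hm
    rw [le_div_iff₀ hr] at hsp
    rw [div_le_iff₀ hpos, norm_mul]
    have h2 : (2 / r) * ‖w‖ * (1 - ‖f 0‖ ^ 2) = 2 * ‖w‖ * (1 - ‖f 0‖ ^ 2) / r := by ring
    rw [h2, le_div_iff₀ hr]
    nlinarith [norm_nonneg w, norm_nonneg (deriv f 0)]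
  have hmem : (2 / r) * ‖w‖ ∈ S := by
    refine ⟨fun z => z / (r:ℂ), (differentiable_id.div_const _).differentiableOn, ?_, ?_⟩
    · intro z hz
      rw [mem_ball, dist_zero_right] at *
      rw [norm_div, Complex.norm_real, Real.norm_of_nonneg hr.le, div_lt_one hr]
      exact hz
    · have hda : HasDerivAt (fun z : ℂ => z / (r:ℂ)) (1 / (r:ℂ)) 0 := by
        simpa using (hasDerivAt_id (0:ℂ)).div_const (r:ℂ)
      rw [hda.deriv]
      simp [norm_mul, norm_div, Complex.norm_real, Real.norm_of_nonneg hr.le]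
      ring
  exact le_antisymm (csSup_le ⟨_, hmem⟩ hub) (le_csSup ⟨_, hub⟩ hmem)
end

section
/- Let n ≥ k ≥ 1 be integers. There exist positive constants c₁ and c₂, depending only on n and k, such that for all positive definite Hermitian n×n complex matrices A₁ and A₂ and every k×n complex matrix B of rank k, one has c₁ · (λ_{n−k+1}(A₁)⋯λ_n(A₁)) / (λ₁(A₂)⋯λ_k(A₂)) ≤ det(B A₁ B*) / det(B A₂ B*) ≤ c₂ · (λ₁(A₁)⋯λ_k(A₁)) / (λ_{n−k+1}(A₂)⋯λ_n(A₂)), where B* is the conjugate transpose of B. -/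
open Polynomial
open scoped ComplexOrder

namespace DetRatioAux

open Matrix Finset

variable {k n : ℕ}

lemma det_rows_add_smul_eq (A : Matrix (Fin k) (Fin k) ℂ) (a : Fin k) (cc : Fin k → ℂ)
    (s : Finset (Fin k)) (ha : a ∉ s) :
    (Matrix.of fun p q => A p q + if p ∈ s then cc p * A a q else 0).det = A.det := by
  induction s using Finset.induction_on with
  | empty =>
      congr 1; ext p q; simp
  | @insert b s hb ih =>
      have hab : a ≠ b := fun h => ha (h ▸ Finset.mem_insert_self _ _)
      have has : a ∉ s := fun h => ha (Finset.mem_insert_of_mem h)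
      set N : Matrix (Fin k) (Fin k) ℂ :=
        Matrix.of fun p q => A p q + if p ∈ s then cc p * A a q else 0 with hN
      have hNa : N a = A a := by funext q; simp [hN, has]
      have hNb : N b = A b := by funext q; simp [hN, hb]
      have hmat : (Matrix.of fun p q => A p q + if p ∈ insert b s then cc p * A a q else 0)
          = N.updateRow b (N b + cc b • N a) := by
        ext p q
        by_cases hpb : p = b
        · subst hpb
          simp [Matrix.updateRow_self, hNa, hNb, hb]
        · simp [Matrix.updateRow_ne hpb, hN, Finset.mem_insert, hpb]
      rw [hmat, Matrix.det_updateRow_add, Matrix.updateRow_eq_self,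
        Matrix.det_updateRow_smul, Matrix.det_updateRow_eq_zero hab, mul_zero, add_zero, ih has]

lemma det_row_pert (M : Matrix (Fin k) (Fin k) ℂ) (u v : Fin k → ℂ) (s : Finset (Fin k)) :
    (Matrix.of fun p q => M p q + if p ∈ s then u p * v q else 0).det
      = M.det + ∑ p ∈ s, u p * (M.updateRow p v).det := by
  induction s using Finset.induction_on with
  | empty =>
      rw [Finset.sum_empty, add_zero]
      congr 1; ext p q; simp
  | @insert a s ha ih =>
      set N : Matrix (Fin k) (Fin k) ℂ :=
        Matrix.of fun p q => M p q + if p ∈ s then u p * v q else 0 with hN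
      have hNa : N a = M a := by funext q; simp [hN, ha]
      have hmat : (Matrix.of fun p q => M p q + if p ∈ insert a s then u p * v q else 0)
          = N.updateRow a (N a + u a • v) := by
        ext p q
        by_cases hpa : p = a
        · subst hpa
          simp [Matrix.updateRow_self, hNa, ha]
        · simp [Matrix.updateRow_ne hpa, hN, Finset.mem_insert, hpa]
      have hclean : N.updateRow a v = Matrix.of fun p q =>
          (M.updateRow a v) p q + if p ∈ s then u p * ((M.updateRow a v) a q) else 0 := by
        ext p q
        by_cases hpa : p = a
        · subst hpa
          simp [Matrix.updateRow_self, ha]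
        · simp [Matrix.updateRow_ne hpa, hN, Matrix.updateRow_self]
      rw [hmat, Matrix.det_updateRow_add, Matrix.updateRow_eq_self, Matrix.det_updateRow_smul,
        hclean, det_rows_add_smul_eq (M.updateRow a v) a u s ha, ih,
        Finset.sum_insert ha]
      ring

lemma mul_diag_conj_apply (E : Matrix (Fin k) (Fin n) ℂ) (d : Fin n → ℂ) (p q : Fin k) :
    (E * diagonal d * Eᴴ) p q = ∑ j, E p j * d j * star (E q j) := by
  rw [Matrix.mul_apply]
  refine Finset.sum_congr rfl fun j _ => ?_
  rw [Matrix.mul_diagonal, Matrix.conjTranspose_apply]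

noncomputable def gfun (E : Matrix (Fin k) (Fin n) ℂ) (lam : Fin n → ℝ) : ℝ :=
  ((E * diagonal (fun j => (lam j : ℂ)) * Eᴴ).det).re

lemma det_re_nonneg_of_posSemidef {m : ℕ} {M : Matrix (Fin m) (Fin m) ℂ}
    (h : M.PosSemidef) : 0 ≤ M.det.re := by
  rw [h.isHermitian.det_eq_prod_eigenvalues, ← RCLike.ofReal_prod]
  show (0:ℝ) ≤ (Complex.ofReal (∏ i, h.isHermitian.eigenvalues i)).re
  rw [Complex.ofReal_re]
  exact Finset.prod_nonneg fun i _ => h.eigenvalues_nonneg i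

lemma g_nonneg (E : Matrix (Fin k) (Fin n) ℂ) {lam : Fin n → ℝ} (h : ∀ j, 0 ≤ lam j) :
    0 ≤ gfun E lam := by
  have hle : (0 : Fin n → ℂ) ≤ fun j => (lam j : ℂ) := by
    intro j
    simpa using Complex.zero_le_real.mpr (h j)
  exact det_re_nonneg_of_posSemidef ((Matrix.PosSemidef.diagonal hle).mul_mul_conjTranspose_same E)

lemma g_affine (E : Matrix (Fin k) (Fin n) ℂ) (lam : Fin n → ℝ) (i : Fin n) :
    ∃ a b : ℝ, ∀ t : ℝ, gfun E (Function.update lam i t) = a + b * t := by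
  classical
  set M0 : Matrix (Fin k) (Fin k) ℂ :=
    E * diagonal (fun j => ((Function.update lam i 0 j : ℝ) : ℂ)) * Eᴴ with hM0
  set u : Fin k → ℂ := fun p => E p i with hu
  set v : Fin k → ℂ := fun q => star (E q i) with hv
  refine ⟨M0.det.re, (∑ p, u p * (M0.updateRow p v).det).re, fun t => ?_⟩
  have hmat : E * diagonal (fun j => ((Function.update lam i t j : ℝ) : ℂ)) * Eᴴ
      = Matrix.of fun p q => M0 p q + if p ∈ (Finset.univ : Finset (Fin k))
          then ((t : ℂ) * u p) * v q else 0 := by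
    ext p q
    rw [mul_diag_conj_apply]
    simp only [Matrix.of_apply, Finset.mem_univ, if_true, hM0, mul_diag_conj_apply]
    have hsplit : ∀ j, (E p j * ((Function.update lam i t j : ℝ) : ℂ) * star (E q j))
        = E p j * ((Function.update lam i 0 j : ℝ) : ℂ) * star (E q j)
          + (if j = i then (t : ℂ) * u p * v q else 0) := by
      intro j
      by_cases hj : j = i
      · subst hj
        simp only [Function.update_self, hu, hv, if_pos rfl]
        push_cast
        ring
      · simp [Function.update_of_ne hj, hj]
    rw [Finset.sum_congr rfl (fun j _ => hsplit j), Finset.sum_add_distrib,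
      Finset.sum_ite_eq' Finset.univ i (fun _ => (t : ℂ) * u p * v q)]
    simp [mul_assoc]
  rw [gfun, hmat, det_row_pert]
  have hfac : ∑ p, ((t : ℂ) * u p) * (M0.updateRow p v).det
      = (t : ℂ) * ∑ p, u p * (M0.updateRow p v).det := by
    rw [Finset.mul_sum]
    exact Finset.sum_congr rfl fun p _ => by ring
  rw [hfac, Complex.add_re, Complex.re_ofReal_mul]
  ring

lemma g_coord (E : Matrix (Fin k) (Fin n) ℂ) {lam : Fin n → ℝ} (h : ∀ j, 0 ≤ lam j)
    (i : Fin n) {t : ℝ} (ht : 0 ≤ t) :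
    gfun E (Function.update lam i t) ≤ max t 1 * gfun E (Function.update lam i 1) ∧
    min t 1 * gfun E (Function.update lam i 1) ≤ gfun E (Function.update lam i t) := by
  obtain ⟨a, b, hab⟩ := g_affine E lam i
  have hup : ∀ s : ℝ, 0 ≤ s → 0 ≤ a + b * s := by
    intro s hs
    rw [← hab s]
    refine g_nonneg E fun j => ?_
    rcases eq_or_ne j i with rfl | hj
    · rwa [Function.update_self]
    · rw [Function.update_of_ne hj]; exact h j
  have ha : 0 ≤ a := by simpa using hup 0 le_rfl
  have hb : 0 ≤ b := by
    by_contra hb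
    push_neg at hb
    have hs : 0 ≤ (a + 1) / (-b) := div_nonneg (by linarith) (by linarith)
    have h2 := hup _ hs
    have hbne : b ≠ 0 := ne_of_lt hb
    have hcalc : b * ((a + 1) / (-b)) = -(a + 1) := by
      rw [div_neg, mul_neg, mul_comm, div_mul_cancel₀ _ hbne]
    rw [hcalc] at h2
    linarith
  rw [hab t, hab 1]
  constructor
  · rcases le_total t 1 with h1 | h1
    · rw [max_eq_right h1]
      nlinarith
    · rw [max_eq_left h1]
      nlinarith
  · rcases le_total t 1 with h1 | h1
    · rw [min_eq_left h1]
      nlinarith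
    · rw [min_eq_right h1]
      nlinarith

lemma g_chain (E : Matrix (Fin k) (Fin n) ℂ) {nu : Fin n → ℝ} (h : ∀ j, 0 ≤ nu j)
    (s : Finset (Fin n)) :
    gfun E (fun i => if i ∈ s then nu i else 1)
        ≤ (∏ i ∈ s, max (nu i) 1) * gfun E (fun _ => 1) ∧
    (∏ i ∈ s, min (nu i) 1) * gfun E (fun _ => 1)
        ≤ gfun E (fun i => if i ∈ s then nu i else 1) := by
  classical
  induction s using Finset.induction_on with
  | empty => simp
  | @insert a s ha ih =>
      set base : Fin n → ℝ := fun i => if i ∈ s then nu i else 1 with hbase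
      have hbase0 : ∀ j, 0 ≤ base j := by
        intro j
        by_cases hj : j ∈ s <;> simp [hbase, hj, h j]
      have h1 : (fun i => if i ∈ insert a s then nu i else 1)
          = Function.update base a (nu a) := by
        funext i
        rcases eq_or_ne i a with rfl | hia
        · simp [Function.update_self]
        · simp [Function.update_of_ne hia, hbase, Finset.mem_insert, hia]
      have h2 : base = Function.update base a 1 := by
        funext i
        rcases eq_or_ne i a with rfl | hia
        · simp [Function.update_self, hbase, ha]
        · simp [Function.update_of_ne hia]
      obtain ⟨hcu, hcl⟩ := g_coord E hbase0 a (h a)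
      rw [← h2] at hcu hcl
      have hmax0 : (0:ℝ) ≤ max (nu a) 1 := le_trans zero_le_one (le_max_right _ _)
      have hmin0 : (0:ℝ) ≤ min (nu a) 1 := le_min (h a) zero_le_one
      constructor
      · rw [h1, Finset.prod_insert ha]
        calc gfun E (Function.update base a (nu a)) ≤ max (nu a) 1 * gfun E base := hcu
          _ ≤ max (nu a) 1 * ((∏ i ∈ s, max (nu i) 1) * gfun E (fun _ => 1)) :=
              mul_le_mul_of_nonneg_left ih.1 hmax0
          _ = max (nu a) 1 * (∏ i ∈ s, max (nu i) 1) * gfun E (fun _ => 1) := by ring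
      · rw [h1, Finset.prod_insert ha]
        calc min (nu a) 1 * (∏ i ∈ s, min (nu i) 1) * gfun E (fun _ => 1)
            = min (nu a) 1 * ((∏ i ∈ s, min (nu i) 1) * gfun E (fun _ => 1)) := by ring
          _ ≤ min (nu a) 1 * gfun E base := mul_le_mul_of_nonneg_left ih.2 hmin0
          _ ≤ gfun E (Function.update base a (nu a)) := hcl

lemma g_smul (E : Matrix (Fin k) (Fin n) ℂ) (lam : Fin n → ℝ) (c : ℝ) :
    gfun E (fun i => c * lam i) = c ^ k * gfun E lam := by
  have hdiag : (diagonal (fun j => ((c * lam j : ℝ) : ℂ)))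
      = (c : ℂ) • diagonal (fun j => ((lam j : ℝ) : ℂ)) := by
    have hfn : (fun j => ((c * lam j : ℝ) : ℂ)) = (c : ℂ) • (fun j => ((lam j : ℝ) : ℂ)) := by
      funext j
      simp only [Pi.smul_apply, smul_eq_mul]
      push_cast
      ring
    rw [hfn, Matrix.diagonal_smul]
  rw [gfun, hdiag, Matrix.mul_smul, Matrix.smul_mul, Matrix.det_smul]
  simp only [Fintype.card_fin]
  rw [show ((c:ℂ)^k) = ((c^k : ℝ) : ℂ) by push_cast; ring, Complex.re_ofReal_mul]
  rfl

lemma prod_ite_emb (f : Fin n → ℝ) (p : Fin n → Prop) [DecidablePred p] (emb : Fin k ↪ Fin n)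
    (hmem : ∀ x, x ∈ Finset.univ.map emb ↔ p x) :
    ∏ i : Fin n, (if p i then f i else 1) = ∏ i : Fin k, f (emb i) := by
  rw [← Finset.prod_subset (Finset.subset_univ (Finset.univ.map emb))
    (fun x _ hx => if_neg (fun hp => hx ((hmem x).mpr hp)))]
  rw [Finset.prod_map]
  exact Finset.prod_congr rfl fun i _ =>
    if_pos ((hmem (emb i)).mp (Finset.mem_map_of_mem emb (Finset.mem_univ i)))

lemma key_bounds (hk : 1 ≤ k) (hkn : k ≤ n) (E : Matrix (Fin k) (Fin n) ℂ)
    (mu : Fin n → ℝ) (hmono : Antitone mu) (hpos : ∀ i, 0 < mu i) :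
    (∏ i : Fin k, mu ⟨n - k + i.val, by omega⟩) * (E * Eᴴ).det.re ≤ gfun E mu ∧
    gfun E mu ≤ (∏ i : Fin k, mu ⟨i.val, by omega⟩) * (E * Eᴴ).det.re := by
  have hg1 : gfun E (fun _ => 1) = (E * Eᴴ).det.re := by
    rw [gfun]
    norm_num
  constructor
  · -- lower bound, c = mu ⟨n - k⟩
    set c : ℝ := mu ⟨n - k, by omega⟩ with hc
    have hcpos : 0 < c := hpos _
    set nu : Fin n → ℝ := fun i => c⁻¹ * mu i with hnu
    have hnu0 : ∀ j, 0 ≤ nu j := fun j => le_of_lt (by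
      have := hpos j
      rw [hnu]
      positivity)
    have hmu_eq : mu = fun i => c * nu i := by
      funext i
      rw [hnu]
      field_simp
    have hgsm : gfun E mu = c ^ k * gfun E nu := by
      conv_lhs => rw [hmu_eq]
      exact g_smul E nu c
    have hnu_univ : (fun i : Fin n => if i ∈ (Finset.univ : Finset (Fin n)) then nu i else 1)
        = nu := by funext i; simp
    have hchain := (g_chain E hnu0 Finset.univ).2
    rw [hnu_univ] at hchain
    set emb : Fin k ↪ Fin n :=
      ⟨fun i => ⟨n - k + i.val, by omega⟩, by
        intro a b hab
        simp only [Fin.mk.injEq] at hab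
        exact Fin.ext (by omega)⟩ with hemb
    have hmem : ∀ x : Fin n, x ∈ Finset.univ.map emb ↔ n - k ≤ x.val := by
      intro x
      simp only [Finset.mem_map, Finset.mem_univ, true_and, hemb, Function.Embedding.coeFn_mk]
      constructor
      · rintro ⟨i, rfl⟩
        exact Nat.le_add_right _ _
      · intro hx
        exact ⟨⟨x.val - (n - k), by omega⟩, by ext; show n - k + (x.val - (n - k)) = x.val; omega⟩
    have hite : (fun i : Fin n => min (nu i) 1)
        = fun i : Fin n => if n - k ≤ i.val then nu i else 1 := by
      funext i
      by_cases hi : n - k ≤ i.val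
      · rw [if_pos hi, min_eq_left]
        have hle : mu i ≤ c := hmono (Fin.le_def.mpr (by simpa using hi))
        have h1 : c⁻¹ * mu i ≤ c⁻¹ * c :=
          mul_le_mul_of_nonneg_left hle (inv_nonneg.mpr hcpos.le)
        rw [inv_mul_cancel₀ hcpos.ne'] at h1
        exact h1
      · rw [if_neg hi, min_eq_right]
        have hle : c ≤ mu i := hmono (Fin.le_def.mpr (by simp; omega))
        have h1 : c⁻¹ * c ≤ c⁻¹ * mu i :=
          mul_le_mul_of_nonneg_left hle (inv_nonneg.mpr hcpos.le)
        rw [inv_mul_cancel₀ hcpos.ne'] at h1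
        exact h1
    have hprod : (∏ i : Fin n, min (nu i) 1) = ∏ i : Fin k, nu (emb i) := by
      rw [show (∏ i : Fin n, min (nu i) 1) = ∏ i : Fin n, (if n - k ≤ i.val then nu i else 1) from
        Finset.prod_congr rfl fun i _ => congrFun hite i]
      exact prod_ite_emb nu (fun x => n - k ≤ x.val) emb hmem
    have hmuprod : (∏ i : Fin k, mu ⟨n - k + i.val, by omega⟩)
        = c ^ k * ∏ i : Fin k, nu (emb i) := by
      have : ∀ i : Fin k, mu ⟨n - k + i.val, by omega⟩ = c * nu (emb i) := by
        intro i
        conv_lhs => rw [hmu_eq]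
        rfl
      rw [Finset.prod_congr rfl fun i _ => this i, Finset.prod_mul_distrib,
        Finset.prod_const, Finset.card_univ, Fintype.card_fin]
    calc (∏ i : Fin k, mu ⟨n - k + i.val, by omega⟩) * (E * Eᴴ).det.re
        = c ^ k * ((∏ i : Fin k, nu (emb i)) * gfun E (fun _ => 1)) := by
          rw [hmuprod, hg1]; ring
      _ ≤ c ^ k * gfun E nu := by
          rw [← hprod] at *
          exact mul_le_mul_of_nonneg_left (by rw [hg1] at hchain ⊢; exact (hprod ▸ hchain))
            (by positivity)
      _ = gfun E mu := hgsm.symm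
  · -- upper bound, c = mu ⟨k - 1⟩
    set c : ℝ := mu ⟨k - 1, by omega⟩ with hc
    have hcpos : 0 < c := hpos _
    set nu : Fin n → ℝ := fun i => c⁻¹ * mu i with hnu
    have hnu0 : ∀ j, 0 ≤ nu j := fun j => le_of_lt (by
      have := hpos j
      rw [hnu]
      positivity)
    have hmu_eq : mu = fun i => c * nu i := by
      funext i
      rw [hnu]
      field_simp
    have hgsm : gfun E mu = c ^ k * gfun E nu := by
      conv_lhs => rw [hmu_eq]
      exact g_smul E nu c
    have hnu_univ : (fun i : Fin n => if i ∈ (Finset.univ : Finset (Fin n)) then nu i else 1)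
        = nu := by funext i; simp
    have hchain := (g_chain E hnu0 Finset.univ).1
    rw [hnu_univ] at hchain
    set emb : Fin k ↪ Fin n :=
      ⟨fun i => ⟨i.val, by omega⟩, by
        intro a b hab
        simpa [Fin.ext_iff] using hab⟩ with hemb
    have hmem : ∀ x : Fin n, x ∈ Finset.univ.map emb ↔ x.val < k := by
      intro x
      simp only [Finset.mem_map, Finset.mem_univ, true_and, hemb, Function.Embedding.coeFn_mk]
      constructor
      · rintro ⟨i, rfl⟩
        exact i.isLt
      · intro hx
        exact ⟨⟨x.val, hx⟩, by ext; rfl⟩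
    have hite : (fun i : Fin n => max (nu i) 1)
        = fun i : Fin n => if i.val < k then nu i else 1 := by
      funext i
      by_cases hi : i.val < k
      · rw [if_pos hi, max_eq_left]
        have hle : c ≤ mu i := hmono (Fin.le_def.mpr (by simp; omega))
        have h1 : c⁻¹ * c ≤ c⁻¹ * mu i :=
          mul_le_mul_of_nonneg_left hle (inv_nonneg.mpr hcpos.le)
        rw [inv_mul_cancel₀ hcpos.ne'] at h1
        exact h1
      · rw [if_neg hi, max_eq_right]
        have hle : mu i ≤ c := hmono (Fin.le_def.mpr (by simp; omega))
        have h1 : c⁻¹ * mu i ≤ c⁻¹ * c :=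
          mul_le_mul_of_nonneg_left hle (inv_nonneg.mpr hcpos.le)
        rw [inv_mul_cancel₀ hcpos.ne'] at h1
        exact h1
    have hprod : (∏ i : Fin n, max (nu i) 1) = ∏ i : Fin k, nu (emb i) := by
      rw [show (∏ i : Fin n, max (nu i) 1) = ∏ i : Fin n, (if i.val < k then nu i else 1) from
        Finset.prod_congr rfl fun i _ => congrFun hite i]
      exact prod_ite_emb nu (fun x => x.val < k) emb hmem
    have hmuprod : (∏ i : Fin k, mu ⟨i.val, by omega⟩)
        = c ^ k * ∏ i : Fin k, nu (emb i) := by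
      have : ∀ i : Fin k, mu ⟨i.val, by omega⟩ = c * nu (emb i) := by
        intro i
        conv_lhs => rw [hmu_eq]
        rfl
      rw [Finset.prod_congr rfl fun i _ => this i, Finset.prod_mul_distrib,
        Finset.prod_const, Finset.card_univ, Fintype.card_fin]
    calc gfun E mu = c ^ k * gfun E nu := hgsm
      _ ≤ c ^ k * ((∏ i : Fin k, nu (emb i)) * gfun E (fun _ => 1)) := by
          refine mul_le_mul_of_nonneg_left ?_ (by positivity)
          rw [← hprod]
          exact hchain
      _ = (∏ i : Fin k, mu ⟨i.val, by omega⟩) * (E * Eᴴ).det.re := by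
          rw [hmuprod, hg1]; ring

lemma charpoly_isHermitian {m : ℕ} {A : Matrix (Fin m) (Fin m) ℂ} (hH : A.IsHermitian) :
    A.charpoly = ∏ i, (X - C ((hH.eigenvalues i : ℝ) : ℂ)) := by
  classical
  set U : Matrix (Fin m) (Fin m) ℂ := (hH.eigenvectorUnitary : Matrix (Fin m) (Fin m) ℂ) with hU
  set D : Matrix (Fin m) (Fin m) ℂ := diagonal (RCLike.ofReal ∘ hH.eigenvalues) with hD
  have hUU : U * star U = 1 := Matrix.mem_unitaryGroup_iff.mp (hH.eigenvectorUnitary).2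
  have hspec : A = U * D * star U := hH.spectral_theorem
  set φ : Matrix (Fin m) (Fin m) ℂ →+* Matrix (Fin m) (Fin m) ℂ[X] :=
    (Polynomial.C : ℂ →+* ℂ[X]).mapMatrix with hφ
  have hsc : φ U * Matrix.scalar (Fin m) (X : ℂ[X]) * φ (star U)
      = Matrix.scalar (Fin m) (X : ℂ[X]) := by
    rw [← scalar_commute (X : ℂ[X]) (fun r => Commute.all X r) (φ U), mul_assoc,
      ← _root_.map_mul φ, hUU, _root_.map_one φ, mul_one]
  have hcm : charmatrix A = φ U * charmatrix D * φ (star U) := by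
    rw [hspec]
    show Matrix.scalar (Fin m) (X : ℂ[X]) - φ (U * D * star U) = _
    rw [charmatrix, Matrix.mul_sub, Matrix.sub_mul, hsc, _root_.map_mul φ, _root_.map_mul φ]
  have hdet : A.charpoly = D.charpoly := by
    rw [Matrix.charpoly, hcm, Matrix.det_mul, Matrix.det_mul, Matrix.charpoly]
    have : (φ U).det * (charmatrix D).det * (φ (star U)).det
        = (charmatrix D).det * ((φ U).det * (φ (star U)).det) := by ring
    rw [this, ← Matrix.det_mul, ← _root_.map_mul φ, hUU, _root_.map_one φ, Matrix.det_one,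
      mul_one]
  rw [hdet, Matrix.charpoly_of_upperTriangular D (Matrix.blockTriangular_diagonal _)]
  refine Finset.prod_congr rfl fun i _ => ?_
  rw [hD, Matrix.diagonal_apply_eq]
  norm_num

lemma exists_perm_eigen {m : ℕ} {A : Matrix (Fin m) (Fin m) ℂ} (hH : A.IsHermitian)
    (mu : Fin m → ℝ) (hmono : Antitone mu)
    (hchar : A.charpoly = ∏ i, (X - C ((mu i : ℝ) : ℂ))) :
    ∃ σ : Equiv.Perm (Fin m), mu = hH.eigenvalues ∘ σ := by
  classical
  have h1 : ∏ i, (X - C ((mu i : ℝ) : ℂ)) = ∏ i, (X - C ((hH.eigenvalues i : ℝ) : ℂ)) := by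
    rw [← hchar, charpoly_isHermitian hH]
  have key : ∀ f : Fin m → ℝ,
      (Multiset.map (fun a : ℂ => X - C a) (Finset.univ.val.map fun i => ((f i : ℝ) : ℂ))).prod
        = ∏ i, (X - C ((f i : ℝ) : ℂ)) := by
    intro f
    rw [Multiset.map_map, Finset.prod_eq_multiset_prod]
    rfl
  have h2 : (Finset.univ.val.map fun i => ((mu i : ℝ) : ℂ))
      = Finset.univ.val.map (fun i => ((hH.eigenvalues i : ℝ) : ℂ)) := by
    have hr := congrArg Polynomial.roots h1
    rwa [← key mu, ← key hH.eigenvalues, Polynomial.roots_multiset_prod_X_sub_C,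
      Polynomial.roots_multiset_prod_X_sub_C] at hr
  have h3 : (Finset.univ.val.map mu) = Finset.univ.val.map hH.eigenvalues := by
    apply Multiset.map_injective Complex.ofReal_injective
    rwa [Multiset.map_map, Multiset.map_map]
  set σ : Equiv.Perm (Fin m) := Tuple.sort (fun i => - hH.eigenvalues i) with hσ
  refine ⟨σ, ?_⟩
  have hanti : Antitone (hH.eigenvalues ∘ σ) := by
    have hmon := Tuple.monotone_sort (fun i => - hH.eigenvalues i)
    intro a b hab
    have h := hmon hab
    simp only [Function.comp_apply, neg_le_neg_iff] at h ⊢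
    linarith [h]
  have h4 : (Finset.univ.val.map (hH.eigenvalues ∘ σ)) = Finset.univ.val.map hH.eigenvalues := by
    rw [show Finset.univ.val.map (hH.eigenvalues ∘ σ)
        = (Finset.univ.val.map σ).map hH.eigenvalues from (Multiset.map_map _ _ _).symm]
    congr 1
    have h5 := congrArg Finset.val (Finset.map_univ_equiv (σ : Fin m ≃ Fin m))
    rwa [Finset.map_val, Equiv.coe_toEmbedding] at h5
  have h6 : ((List.ofFn mu : Multiset ℝ)) = ((List.ofFn (hH.eigenvalues ∘ σ) : Multiset ℝ)) := by
    rw [← Fin.univ_val_map, ← Fin.univ_val_map, h3, h4]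
  have hperm : (List.ofFn (fun i => - mu i)).Perm
      (List.ofFn fun i => - (hH.eigenvalues ∘ σ) i) := by
    have h7 := (Multiset.coe_eq_coe.mp h6).map (fun x : ℝ => -x)
    simpa [List.map_ofFn, Function.comp_def] using h7
  have hs1 : (List.ofFn (fun i => - mu i)).Pairwise (· ≤ ·) := by
    rw [← List.sortedLE_iff_pairwise, List.sortedLE_ofFn_iff]
    intro a b hab
    simp only [neg_le_neg_iff]
    exact hmono hab
  have hs2 : (List.ofFn (fun i => - (hH.eigenvalues ∘ σ) i)).Pairwise (· ≤ ·) := by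
    rw [← List.sortedLE_iff_pairwise, List.sortedLE_ofFn_iff]
    intro a b hab
    simp only [neg_le_neg_iff]
    exact hanti hab
  have heq := List.Perm.eq_of_pairwise' hs1 hs2 hperm
  have heqf := List.ofFn_injective heq
  funext i
  have := congrFun heqf i
  simpa using this

lemma conjTranspose_injective_of_rank {B : Matrix (Fin k) (Fin n) ℂ} (hB : B.rank = k) :
    Function.Injective Bᴴ.mulVecLin := by
  have h1 : Bᴴ.rank = k := by rw [Matrix.rank_conjTranspose, hB]
  rw [← LinearMap.ker_eq_bot]
  have h2 := LinearMap.finrank_range_add_finrank_ker (Bᴴ.mulVecLin)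
  rw [show Module.finrank ℂ (LinearMap.range Bᴴ.mulVecLin) = Bᴴ.rank from rfl, h1,
    Module.finrank_fin_fun ℂ] at h2
  have h3 : Module.finrank ℂ (LinearMap.ker Bᴴ.mulVecLin) = 0 := by omega
  exact Submodule.finrank_eq_zero.mp h3

lemma posDef_conj {A : Matrix (Fin n) (Fin n) ℂ} (hA : A.PosDef)
    {B : Matrix (Fin k) (Fin n) ℂ} (hB : B.rank = k) : (B * A * Bᴴ).PosDef := by
  rw [Matrix.posDef_iff_dotProduct_mulVec]
  constructor
  · have h := hA.isHermitian
    show (B * A * Bᴴ)ᴴ = B * A * Bᴴ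
    rw [Matrix.conjTranspose_mul, Matrix.conjTranspose_mul, Matrix.conjTranspose_conjTranspose,
      h.eq, Matrix.mul_assoc]
  · intro x hx
    have hBx : Bᴴ *ᵥ x ≠ 0 := by
      intro h
      apply hx
      have := conjTranspose_injective_of_rank hB (a₁ := x) (a₂ := 0)
      simp only [map_zero] at this
      exact this h
    have h := (Matrix.posDef_iff_dotProduct_mulVec.mp hA).2 hBx
    simpa only [star_mulVec, Matrix.dotProduct_mulVec, Matrix.vecMul_vecMul,
      Matrix.conjTranspose_conjTranspose, Matrix.mulVec_mulVec, Matrix.mul_assoc] using h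

lemma perm_conj (E : Matrix (Fin k) (Fin n) ℂ) (d : Fin n → ℂ) (σ : Equiv.Perm (Fin n)) :
    (E.submatrix id σ) * diagonal (fun i => d (σ i)) * (E.submatrix id σ)ᴴ
      = E * diagonal d * Eᴴ := by
  have happ : ∀ (F : Matrix (Fin k) (Fin n) ℂ) (e : Fin n → ℂ) (p q : Fin k),
      (F * diagonal e * Fᴴ) p q = ∑ j, F p j * e j * star (F q j) := by
    intro F e p q
    rw [Matrix.mul_apply]
    refine Finset.sum_congr rfl fun j _ => ?_
    rw [Matrix.mul_diagonal, Matrix.conjTranspose_apply]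
  ext p q
  rw [happ, happ]
  exact Fintype.sum_equiv σ _ _ fun i => rfl

lemma per_matrix (hk : 1 ≤ k) (hkn : k ≤ n) {A : Matrix (Fin n) (Fin n) ℂ}
    {mu : Fin n → ℝ} (B : Matrix (Fin k) (Fin n) ℂ) (hA : A.PosDef)
    (hmono : Antitone mu) (hchar : A.charpoly = ∏ i, (X - C ((mu i : ℝ) : ℂ))) :
    (∀ i, 0 < mu i) ∧
    (∏ i : Fin k, mu ⟨n - k + i.val, by omega⟩) * (B * Bᴴ).det.re ≤ (B * A * Bᴴ).det.re ∧
    (B * A * Bᴴ).det.re ≤ (∏ i : Fin k, mu ⟨i.val, by omega⟩) * (B * Bᴴ).det.re := by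
  obtain ⟨σ, hσ⟩ := exists_perm_eigen hA.isHermitian mu hmono hchar
  have hpos : ∀ i, 0 < mu i := fun i => by
    rw [hσ]
    exact hA.eigenvalues_pos (σ i)
  set U : Matrix (Fin n) (Fin n) ℂ := (hA.isHermitian.eigenvectorUnitary : Matrix (Fin n) (Fin n) ℂ)
    with hU
  have hUU : U * star U = 1 := Matrix.mem_unitaryGroup_iff.mp (hA.isHermitian.eigenvectorUnitary).2
  set E : Matrix (Fin k) (Fin n) ℂ := (B * U).submatrix id σ with hE
  have hdfun : (fun i => ((mu i : ℝ) : ℂ))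
      = fun i => ((RCLike.ofReal ∘ hA.isHermitian.eigenvalues) (σ i) : ℂ) := by
    funext i
    rw [hσ]
    rfl
  have hBA : B * A * Bᴴ = E * diagonal (fun j => ((mu j : ℝ) : ℂ)) * Eᴴ := by
    rw [hE, hdfun, perm_conj (B * U) (RCLike.ofReal ∘ hA.isHermitian.eigenvalues) σ,
      Matrix.conjTranspose_mul]
    conv_lhs => rw [hA.isHermitian.spectral_theorem, Unitary.conjStarAlgAut_apply]
    simp only [← hU]
    rw [show star U = Uᴴ from rfl]
    simp only [Matrix.mul_assoc]
  have hBB : B * Bᴴ = E * Eᴴ := by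
    have h1 := perm_conj (B * U) (fun _ => (1 : ℂ)) σ
    rw [Matrix.diagonal_one, Matrix.mul_one, Matrix.mul_one] at h1
    rw [← hE] at h1
    rw [h1, Matrix.conjTranspose_mul, ← Matrix.mul_assoc, Matrix.mul_assoc B U Uᴴ,
      show U * Uᴴ = (1 : Matrix (Fin n) (Fin n) ℂ) from hUU, Matrix.mul_one]
  have hkey := key_bounds hk hkn E mu hmono hpos
  rw [gfun] at hkey
  rw [← hBA, ← hBB] at hkey
  exact ⟨hpos, hkey⟩

end DetRatioAux

/-- Let `n ≥ k ≥ 1`. There are positive constants `c₁, c₂` depending only on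
`n` and `k` such that for all positive definite Hermitian matrices `A₁, A₂`
with eigenvalues listed in decreasing order as `μ₁, μ₂` (so that the
characteristic polynomial of `Aⱼ` is `∏ i, (X - μⱼ i)` and `μⱼ` is antitone),
and every `k × n` matrix `B` of rank `k`,
`c₁ (λ_{n-k+1}(A₁)⋯λ_n(A₁))/(λ₁(A₂)⋯λ_k(A₂)) ≤ det(BA₁B*)/det(BA₂B*) ≤
c₂ (λ₁(A₁)⋯λ_k(A₁))/(λ_{n-k+1}(A₂)⋯λ_n(A₂))`. -/
theorem det_ratio_eigenvalue_bounds (n k : ℕ) (hk : 1 ≤ k) (hkn : k ≤ n) :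
    ∃ c₁ c₂ : ℝ, 0 < c₁ ∧ 0 < c₂ ∧
      ∀ (A₁ A₂ : Matrix (Fin n) (Fin n) ℂ) (μ₁ μ₂ : Fin n → ℝ)
        (B : Matrix (Fin k) (Fin n) ℂ),
        A₁.PosDef → A₂.PosDef →
        Antitone μ₁ → Antitone μ₂ →
        A₁.charpoly = ∏ i, (X - C (μ₁ i : ℂ)) →
        A₂.charpoly = ∏ i, (X - C (μ₂ i : ℂ)) →
        B.rank = k →
        c₁ * (∏ i : Fin k, μ₁ ⟨n - k + i.val, by omega⟩) /
            (∏ i : Fin k, μ₂ ⟨i.val, by omega⟩)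
          ≤ (B * A₁ * B.conjTranspose).det.re / (B * A₂ * B.conjTranspose).det.re ∧
        (B * A₁ * B.conjTranspose).det.re / (B * A₂ * B.conjTranspose).det.re
          ≤ c₂ * (∏ i : Fin k, μ₁ ⟨i.val, by omega⟩) /
            (∏ i : Fin k, μ₂ ⟨n - k + i.val, by omega⟩) := by
  refine ⟨1, 1, one_pos, one_pos, ?_⟩
  intro A₁ A₂ μ₁ μ₂ B hA₁ hA₂ hm₁ hm₂ hc₁ hc₂ hB
  obtain ⟨hpos₁, hlow₁, hup₁⟩ := DetRatioAux.per_matrix hk hkn B hA₁ hm₁ hc₁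
  obtain ⟨hpos₂, hlow₂, hup₂⟩ := DetRatioAux.per_matrix hk hkn B hA₂ hm₂ hc₂
  have hBBpd : (B * B.conjTranspose).PosDef := by
    have := DetRatioAux.posDef_conj Matrix.PosDef.one hB
    rwa [Matrix.mul_one] at this
  have hd : 0 < (B * B.conjTranspose).det.re := by
    have h := hBBpd.det_pos
    have h2 := (Complex.lt_def.mp h).1
    simpa using h2
  have hD₂ : 0 < (B * A₂ * B.conjTranspose).det.re := by
    have h := (DetRatioAux.posDef_conj hA₂ hB).det_pos
    have h2 := (Complex.lt_def.mp h).1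
    simpa using h2
  have hD₁ : 0 < (B * A₁ * B.conjTranspose).det.re := by
    have h := (DetRatioAux.posDef_conj hA₁ hB).det_pos
    have h2 := (Complex.lt_def.mp h).1
    simpa using h2
  have hP1b : 0 < ∏ i : Fin k, μ₁ ⟨n - k + i.val, by omega⟩ :=
    Finset.prod_pos fun i _ => hpos₁ _
  have hP1t : 0 < ∏ i : Fin k, μ₁ ⟨i.val, by omega⟩ :=
    Finset.prod_pos fun i _ => hpos₁ _
  have hP2b : 0 < ∏ i : Fin k, μ₂ ⟨n - k + i.val, by omega⟩ :=
    Finset.prod_pos fun i _ => hpos₂ _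
  have hP2t : 0 < ∏ i : Fin k, μ₂ ⟨i.val, by omega⟩ :=
    Finset.prod_pos fun i _ => hpos₂ _
  constructor
  · rw [one_mul]
    rw [show (∏ i : Fin k, μ₁ ⟨n - k + i.val, by omega⟩) / (∏ i : Fin k, μ₂ ⟨i.val, by omega⟩)
        = ((∏ i : Fin k, μ₁ ⟨n - k + i.val, by omega⟩) * (B * B.conjTranspose).det.re)
          / ((∏ i : Fin k, μ₂ ⟨i.val, by omega⟩) * (B * B.conjTranspose).det.re) from
      (mul_div_mul_right _ _ (ne_of_gt hd)).symm]
    exact div_le_div₀ hD₁.le hlow₁ hD₂ hup₂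
  · rw [one_mul]
    rw [show (∏ i : Fin k, μ₁ ⟨i.val, by omega⟩) / (∏ i : Fin k, μ₂ ⟨n - k + i.val, by omega⟩)
        = ((∏ i : Fin k, μ₁ ⟨i.val, by omega⟩) * (B * B.conjTranspose).det.re)
          / ((∏ i : Fin k, μ₂ ⟨n - k + i.val, by omega⟩) * (B * B.conjTranspose).det.re) from
      (mul_div_mul_right _ _ (ne_of_gt hd)).symm]
    exact div_le_div₀ (mul_nonneg hP1t.le hd.le) hup₁ (mul_pos hP2b hd) hlow₂
end
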